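/- For every C ≥ 128, every K > 0 and every odd natural number T ≥ 1 there exists a constant C' = C'(C,K,T) > 0 such that the following holds. Let (p,Q) be a block-model parameter pair on 2 communities with p₁ ≤ p₂, and set μ = p₁Q₁₁ + p₂Q₁₂, λ = p₁Q₁₂ + p₂Q₂₂. Assume: (i) p₁|Q₁₁| + p₂|Q₁₂| ≤ C|μ|; (ii) p₁|Q₁₂| + p₂|Q₂₂| ≤ C|λ|; (iii) (4C²)^T · |p₁μ^T + p₂λ^T| ≤ p₁|μ|^T + p₂|λ|^T; (iv) p₁|Q₁₁| ≤ |Q₁₂|; and (v) p₁ ≤ |Q₁₂|. Then every finite simple graph H with at least one vertex satisfying |Φ_{p,Q}(H)|^{1/|V(H)|} ≤ K · (p₁·(p₁|Q₁₁| + p₂|Q₁₂|)^T + p₂·(p₁|Q₁₂| + p₂|Q₂₂|)^T)^{1/(T+1)} also satisfies Ψ_{p,Q}(H) ≤ C' · Ψ_{p,Q}(Star_{T+1}). -/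

import Mathlib

set_option linter.unusedVariables false

open Finset

open Finset

/-- The Fourier coefficient Φ_{p,Q}(H) of a finite simple graph `H`. -/
noncomputable def Phi {k : ℕ} (p : Fin k → ℝ) (Q : Fin k → Fin k → ℝ)
    (hQ : ∀ i j, Q i j = Q j i) {V : Type} [Fintype V] [DecidableEq V]
    (H : SimpleGraph V) [DecidableRel H.Adj] : ℝ :=
  ∑ x : V → Fin k, (∏ v, p (x v)) *
    ∏ e ∈ H.edgeFinset,
      Sym2.lift ⟨fun u v => Q (x u) (x v), fun u v => hQ (x u) (x v)⟩ e

/-- The partition value Ψ_{p,Q}(H) = |Φ_{p,Q}(H)|^{1/|V(H)|}. -/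
noncomputable def Psi {k : ℕ} (p : Fin k → ℝ) (Q : Fin k → Fin k → ℝ)
    (hQ : ∀ i j, Q i j = Q j i) {V : Type} [Fintype V] [DecidableEq V]
    (H : SimpleGraph V) [DecidableRel H.Adj] : ℝ :=
  |Phi p Q hQ H| ^ ((Fintype.card V : ℝ)⁻¹)

/-- The star graph with one center (vertex 0) joined to `t` leaves. -/
def StarGraph (t : ℕ) : SimpleGraph (Fin (t + 1)) where
  Adj u v := u ≠ v ∧ (u = 0 ∨ v = 0)
  symm := ⟨fun u v h => ⟨h.1.symm, h.2.symm⟩⟩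
  loopless := ⟨fun u h => h.1 rfl⟩

instance (t : ℕ) : DecidableRel (StarGraph t).Adj :=
  fun u v => inferInstanceAs (Decidable (u ≠ v ∧ (u = 0 ∨ v = 0)))

/-- The cycle graph on 4 vertices. -/
def Cyc4 : SimpleGraph (Fin 4) where
  Adj u v := u ≠ v ∧ ((u.val + 1) % 4 = v.val ∨ (v.val + 1) % 4 = u.val)
  symm := ⟨fun u v h => ⟨h.1.symm, h.2.symm⟩⟩
  loopless := ⟨fun u h => h.1 rfl⟩

instance : DecidableRel Cyc4.Adj :=
  fun u v => inferInstanceAs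
    (Decidable (u ≠ v ∧ ((u.val + 1) % 4 = v.val ∨ (v.val + 1) % 4 = u.val)))



lemma star_edgeFinset (t : ℕ) :
    (StarGraph t).edgeFinset
      = (Finset.univ : Finset (Fin t)).image (fun l => s(0, Fin.succ l)) := by
  ext e
  induction e with
  | _ a b =>
    simp only [SimpleGraph.mem_edgeFinset, SimpleGraph.mem_edgeSet, Finset.mem_image,
      Finset.mem_univ, true_and]
    constructor
    · rintro ⟨hab, rfl | rfl⟩
      · obtain ⟨l, rfl⟩ := Fin.exists_succ_eq_of_ne_zero (Ne.symm hab)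
        exact ⟨l, rfl⟩
      · obtain ⟨l, rfl⟩ := Fin.exists_succ_eq_of_ne_zero hab
        exact ⟨l, Sym2.eq_swap⟩
    · rintro ⟨l, heq⟩
      rw [Sym2.eq_iff] at heq
      rcases heq with ⟨rfl, rfl⟩ | ⟨h1, rfl⟩
      · exact ⟨(Fin.succ_ne_zero l).symm, Or.inl rfl⟩
      · exact ⟨fun h => Fin.succ_ne_zero l (h.trans h1.symm), Or.inr h1.symm⟩

lemma phi_star {k : ℕ} (p : Fin k → ℝ) (Q : Fin k → Fin k → ℝ)
    (hQ : ∀ i j, Q i j = Q j i) (t : ℕ) :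
    Phi p Q hQ (StarGraph t) = ∑ i, p i * (∑ j, p j * Q i j) ^ t := by
  unfold Phi
  have hinj : ∀ u ∈ (Finset.univ : Finset (Fin t)), ∀ v ∈ (Finset.univ : Finset (Fin t)),
      s((0 : Fin (t+1)), Fin.succ u) = s(0, Fin.succ v) → u = v := by
    intro u _ v _ h
    rw [Sym2.eq_iff] at h
    rcases h with ⟨-, h⟩ | ⟨h, -⟩
    · exact Fin.succ_injective _ h
    · exact absurd h.symm (Fin.succ_ne_zero v)
  have hrw : ∀ x : Fin (t+1) → Fin k,
      (∏ v, p (x v)) *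
        ∏ e ∈ (StarGraph t).edgeFinset,
          Sym2.lift ⟨fun u v => Q (x u) (x v), fun u v => hQ (x u) (x v)⟩ e
      = p (x 0) * ∏ l : Fin t, (p (x (Fin.succ l)) * Q (x 0) (x (Fin.succ l))) := by
    intro x
    rw [star_edgeFinset, Finset.prod_image hinj, Fin.prod_univ_succ (fun v => p (x v))]
    simp only [Sym2.lift_mk]
    rw [mul_assoc, ← Finset.prod_mul_distrib]
  simp only [hrw]
  rw [← Equiv.sum_comp (Fin.consEquiv (fun _ : Fin (t+1) => Fin k))
    (fun x : Fin (t+1) → Fin k =>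
      p (x 0) * ∏ l : Fin t, (p (x (Fin.succ l)) * Q (x 0) (x (Fin.succ l)))),
    Fintype.sum_prod_type]
  refine Finset.sum_congr rfl fun i _ => ?_
  have : ∀ y : Fin t → Fin k,
      (Fin.consEquiv (fun _ : Fin (t+1) => Fin k)) (i, y) = Fin.cons i y := fun _ => rfl
  simp only [this, Fin.cons_zero, Fin.cons_succ]
  rw [← Finset.mul_sum]
  congr 1
  rw [← Fintype.piFinset_univ, ← Finset.prod_univ_sum (fun _ : Fin t => Finset.univ)
      (fun _ (j : Fin k) => p j * Q i j)]
  simp [Finset.prod_const]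

set_option maxHeartbeats 1000000

/-- between-community cancellations with p₁ ≤ |Q₁₂|:
Star_{T+1} dominates. -/
theorem stmt15 (C : ℝ) (hC : 128 ≤ C) (K : ℝ) (hK : 0 < K)
    (T : ℕ) (hT : 1 ≤ T) (hTodd : Odd T) :
    ∃ C' : ℝ, 0 < C' ∧
      ∀ (p : Fin 2 → ℝ) (Q : Fin 2 → Fin 2 → ℝ),
        (∀ i, 0 ≤ p i) → (∑ i, p i = 1) →
        ∀ (hQ : ∀ i j, Q i j = Q j i),
        (∀ i j, |Q i j| ≤ 1) → p 0 ≤ p 1 →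
        p 0 * |Q 0 0| + p 1 * |Q 0 1| ≤ C * |p 0 * Q 0 0 + p 1 * Q 0 1| →
        p 0 * |Q 0 1| + p 1 * |Q 1 1| ≤ C * |p 0 * Q 0 1 + p 1 * Q 1 1| →
        (4 * C ^ 2) ^ T *
            |p 0 * (p 0 * Q 0 0 + p 1 * Q 0 1) ^ T +
              p 1 * (p 0 * Q 0 1 + p 1 * Q 1 1) ^ T| ≤
          p 0 * |p 0 * Q 0 0 + p 1 * Q 0 1| ^ T +
            p 1 * |p 0 * Q 0 1 + p 1 * Q 1 1| ^ T →
        p 0 * |Q 0 0| ≤ |Q 0 1| → p 0 ≤ |Q 0 1| →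
      ∀ (V : Type) [Fintype V] [DecidableEq V] (H : SimpleGraph V) [DecidableRel H.Adj],
        Nonempty V →
        |Phi p Q hQ H| ^ ((Fintype.card V : ℝ)⁻¹) ≤
          K * (p 0 * (p 0 * |Q 0 0| + p 1 * |Q 0 1|) ^ T +
                p 1 * (p 0 * |Q 0 1| + p 1 * |Q 1 1|) ^ T) ^ (1 / ((T : ℝ) + 1)) →
        Psi p Q hQ H ≤ C' * Psi p Q hQ (StarGraph (T + 1)) := by
  have hC0 : (0:ℝ) < C := lt_of_lt_of_le (by norm_num) hC
  have hC1 : (1:ℝ) ≤ C := by linarith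
  refine ⟨K * (C ^ T * (8 * C * 4 ^ (T + 1))), by positivity, ?_⟩
  intro p Q hp hpsum hQ hQ1 hple hi hii hiii hiv hv V _ _ H _ hne hHyp
  have hp0 := hp 0
  have hp1 := hp 1
  have hsum : p 0 + p 1 = 1 := by simpa [Fin.sum_univ_two] using hpsum
  set m := p 0 * Q 0 0 + p 1 * Q 0 1 with hm
  set l := p 0 * Q 0 1 + p 1 * Q 1 1 with hl
  set A := p 0 * |Q 0 0| + p 1 * |Q 0 1| with hA
  set B := p 0 * |Q 0 1| + p 1 * |Q 1 1| with hB
  set ST := p 0 * |m| ^ T + p 1 * |l| ^ T with hST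
  set S1 := p 0 * |m| ^ (T+1) + p 1 * |l| ^ (T+1) with hS1
  set c' := 8 * C * 4 ^ (T+1) with hc'
  clear_value m l A B ST S1 c'
  have hc'0 : (0:ℝ) < c' := by rw [hc']; positivity
  have hS1nonneg : 0 ≤ S1 := by rw [hS1]; positivity
  have hPhiStar : Phi p Q hQ (StarGraph (T+1)) = S1 := by
    have hev : Even (T+1) := hTodd.add_one
    rw [phi_star, Fin.sum_univ_two, hS1, hev.pow_abs m, hev.pow_abs l, hm, hl,
      Fin.sum_univ_two, Fin.sum_univ_two, hQ 1 0]
  have hPsiStar : Psi p Q hQ (StarGraph (T+1)) = S1 ^ (((T+2 : ℕ) : ℝ))⁻¹ := by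
    rw [Psi, hPhiStar, abs_of_nonneg hS1nonneg, Fintype.card_fin]
  have hA0 : 0 ≤ A := by rw [hA]; positivity
  have hB0 : 0 ≤ B := by rw [hB]; positivity
  have hRnn : 0 ≤ p 0 * A ^ T + p 1 * B ^ T := by positivity
  have hRST : p 0 * A ^ T + p 1 * B ^ T ≤ C ^ T * ST := by
    have h1 : A ^ T ≤ C ^ T * |m| ^ T := by
      calc A ^ T ≤ (C * |m|) ^ T := pow_le_pow_left₀ hA0 hi T
      _ = C ^ T * |m| ^ T := mul_pow _ _ _
    have h2 : B ^ T ≤ C ^ T * |l| ^ T := by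
      calc B ^ T ≤ (C * |l|) ^ T := pow_le_pow_left₀ hB0 hii T
      _ = C ^ T * |l| ^ T := mul_pow _ _ _
    have h3 := mul_le_mul_of_nonneg_left h1 hp0
    have h4 := mul_le_mul_of_nonneg_left h2 hp1
    rw [hST]
    ring_nf
    ring_nf at h3 h4
    linarith only [h3, h4]
  rw [hPsiStar]
  by_cases hST0 : ST ≤ 0
  · have hSTnn : 0 ≤ ST := by rw [hST]; positivity
    have hR0 : p 0 * A ^ T + p 1 * B ^ T = 0 := by
      refine le_antisymm (hRST.trans ?_) (by positivity)
      have : ST = 0 := le_antisymm hST0 hSTnn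
      rw [this, mul_zero]
    rw [Psi]
    calc |Phi p Q hQ H| ^ ((Fintype.card V : ℝ)⁻¹)
        ≤ K * (p 0 * A ^ T + p 1 * B ^ T) ^ (1/((T:ℝ)+1)) := hHyp
      _ = 0 := by
          rw [hR0, Real.zero_rpow (by positivity), mul_zero]
      _ ≤ _ := by positivity
  · have hSTpos : 0 < ST := lt_of_not_ge hST0
    -- cancellation: p 0 * |m| ^ T ≥ ST / 4
    have hcancel : ST / 4 ≤ p 0 * |m| ^ T := by
      have hCC : (128:ℝ)*128 ≤ C*C := mul_le_mul hC hC (by norm_num) hC0.le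
      have hbase : (2:ℝ) ≤ 4 * C ^ 2 := by rw [pow_two]; linarith only [hCC]
      have h2pow : (2:ℝ) ≤ (4 * C ^ 2) ^ T :=
        hbase.trans (le_self_pow₀ (by linarith) (by omega))
      have hX : |p 0 * m ^ T + p 1 * l ^ T| ≤ ST / 2 := by
        have habs : 0 ≤ |p 0 * m ^ T + p 1 * l ^ T| := abs_nonneg _
        have hmm := mul_le_mul_of_nonneg_right h2pow habs
        linarith only [hiii, hmm, habs]
      have h3 := abs_sub_abs_le_abs_sub (p 1 * l ^ T) (-(p 0 * m ^ T))
      rw [abs_neg, sub_neg_eq_add] at h3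
      have e1 : |p 1 * l ^ T| = p 1 * |l| ^ T := by
        rw [abs_mul, abs_of_nonneg hp1, abs_pow]
      have e2 : |p 0 * m ^ T| = p 0 * |m| ^ T := by
        rw [abs_mul, abs_of_nonneg hp0, abs_pow]
      rw [e1, e2, add_comm (p 1 * l ^ T) (p 0 * m ^ T)] at h3
      rw [hST] at hX ⊢
      linarith only [hX, h3]
    have hpm : p 0 ≤ 2 * C * |m| := by
      have hp1half : (1:ℝ)/2 ≤ p 1 := by linarith
      have hAm : p 1 * |Q 0 1| ≤ C * |m| := by
        refine le_trans ?_ hi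
        have := mul_nonneg hp0 (abs_nonneg (Q 0 0))
        rw [hA]
        linarith only [this]
      have hq1 : (1/2) * |Q 0 1| ≤ p 1 * |Q 0 1| :=
        mul_le_mul_of_nonneg_right hp1half (abs_nonneg _)
      linarith only [hv, hAm, hq1]
    have hS1lb : ST / 4 * |m| ≤ S1 := by
      have h1 : p 0 * |m| ^ T * |m| ≤ S1 := by
        rw [hS1, pow_succ]
        have h2 := mul_nonneg hp1 (pow_nonneg (abs_nonneg l) (T+1))
        linarith only [h2]
      calc ST / 4 * |m| ≤ p 0 * |m| ^ T * |m| :=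
            mul_le_mul_of_nonneg_right hcancel (abs_nonneg m)
        _ ≤ S1 := h1
    have hkey : ST ^ (T+2) ≤ c' * S1 ^ (T+1) := by
      have hub : ST ≤ 4 * (p 0 * |m| ^ T) := by linarith only [hcancel]
      have hS1T : (ST/4 * |m|) ^ (T+1) ≤ S1 ^ (T+1) :=
        pow_le_pow_left₀ (by positivity) hS1lb (T+1)
      calc ST ^ (T+2) = ST * ST ^ (T+1) := by ring
        _ ≤ (4 * (p 0 * |m| ^ T)) * ST ^ (T+1) :=
            mul_le_mul_of_nonneg_right hub (pow_nonneg hSTpos.le _)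
        _ = (4 * p 0) * (|m| ^ T * ST ^ (T+1)) := by ring
        _ ≤ (8 * C * |m|) * (|m| ^ T * ST ^ (T+1)) := by
            refine mul_le_mul_of_nonneg_right (by linarith only [hpm]) (by positivity)
        _ = c' * (ST/4 * |m|) ^ (T+1) := by
            have h1 : ((ST/4 * |m|):ℝ) ^ (T+1) = ST ^ (T+1) * |m| ^ (T+1) / 4 ^ (T+1) := by
              rw [div_mul_eq_mul_div, div_pow, mul_pow]
            rw [h1, hc', pow_succ |m| T]
            have h4 : ((4:ℝ)) ^ (T+1) ≠ 0 := by positivity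
            field_simp
        _ ≤ c' * S1 ^ (T+1) := mul_le_mul_of_nonneg_left hS1T hc'0.le
    -- assemble
    refine le_trans hHyp ?_
    rw [mul_assoc]
    refine mul_le_mul_of_nonneg_left ?_ hK.le
    have hXpos : 0 < C ^ T * ST := by positivity
    have hn : (T+1)*(T+2) ≠ 0 := by positivity
    have hT2ne : ((T:ℝ)+2) ≠ 0 := by positivity
    have hT1ne : ((T:ℝ)+1) ≠ 0 := by positivity
    have he1 : (1 / ((T:ℝ)+1)) * ((((T+1)*(T+2) : ℕ)) : ℝ) = (((T+2 : ℕ)) : ℝ) := by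
      push_cast
      field_simp
    have he2 : ((((T+2 : ℕ)) : ℝ))⁻¹ * ((((T+1)*(T+2) : ℕ)) : ℝ) = (((T+1 : ℕ)) : ℝ) := by
      push_cast
      field_simp
    calc (p 0 * A ^ T + p 1 * B ^ T) ^ (1/((T:ℝ)+1))
        ≤ (C ^ T * ST) ^ (1/((T:ℝ)+1)) := Real.rpow_le_rpow hRnn hRST (by positivity)
      _ ≤ (C ^ T * c') * S1 ^ (((T+2 : ℕ) : ℝ))⁻¹ := by
          refine le_of_pow_le_pow_left₀ hn (by positivity) ?_
          rw [mul_pow, ← Real.rpow_natCast ((C ^ T * ST) ^ (1/((T:ℝ)+1))) ((T+1)*(T+2)),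
            ← Real.rpow_mul hXpos.le, he1, Real.rpow_natCast,
            ← Real.rpow_natCast (S1 ^ (((T+2 : ℕ) : ℝ))⁻¹) ((T+1)*(T+2)),
            ← Real.rpow_mul hS1nonneg, he2, Real.rpow_natCast]
          have h41 : (1:ℝ) ≤ 4 ^ (T+1) := by
            calc (1:ℝ) = 1 ^ (T+1) := (one_pow _).symm
            _ ≤ 4 ^ (T+1) := pow_le_pow_left₀ (by norm_num) (by norm_num) _
          have hc'1 : (1:ℝ) ≤ c' := by
            rw [hc']
            have h8 : (1:ℝ) ≤ 8 * C := by linarith only [hC]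
            calc (1:ℝ) = 1 * 1 := by norm_num
            _ ≤ (8 * C) * 4 ^ (T+1) := mul_le_mul h8 h41 (by norm_num) (by linarith only [hC])
          have step1 : (C ^ T * ST) ^ (T+2) = C ^ (T*(T+2)) * ST ^ (T+2) := by
            rw [mul_pow, ← pow_mul]
          have step2 : C ^ (T*(T+2)) * ST ^ (T+2) ≤ C ^ (T*(T+2)) * (c' * S1 ^ (T+1)) :=
            mul_le_mul_of_nonneg_left hkey (by positivity)
          have step3 : C ^ (T*(T+2)) * c' ≤ (C ^ T * c') ^ ((T+1)*(T+2)) := by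
            rw [mul_pow, ← pow_mul]
            have hCle : C ^ (T*(T+2)) ≤ C ^ (T*((T+1)*(T+2))) :=
              pow_le_pow_right₀ hC1 (Nat.mul_le_mul_left T (Nat.le_mul_of_pos_left _ (by omega)))
            have hc'le : c' ≤ c' ^ ((T+1)*(T+2)) := le_self_pow₀ hc'1 hn
            exact mul_le_mul hCle hc'le hc'0.le (by positivity)
          calc (C ^ T * ST) ^ (T+2) ≤ C ^ (T*(T+2)) * (c' * S1 ^ (T+1)) := by
                rw [step1]; exact step2
            _ = (C ^ (T*(T+2)) * c') * S1 ^ (T+1) := by ring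
            _ ≤ (C ^ T * c') ^ ((T+1)*(T+2)) * S1 ^ (T+1) :=
                mul_le_mul_of_nonneg_right step3 (by positivity)
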